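/- Let L be an even lattice, let M ⊆ L be a sublattice on which the restricted bilinear form is nondegenerate, and let M⊥ = {x ∈ L : (x,m) = 0 for all m ∈ M}. For any g ∈ Õ(M), let g̃ be the unique ℚ-linear extension of g to L⊗ℚ which is the identity on M⊥⊗ℚ. Then g̃ maps L bijectively onto L and g̃ ∈ Õ(L); in particular Õ(M) embeds as a subgroup of Õ(L). -/

import Mathlib

/-- The dual lattice `L^∨ = {y ∈ L ⊗ ℚ : (y,l) ∈ ℤ for all l ∈ L}`, viewed inside the
ambient rational vector space `V` (which plays the role of `L ⊗ ℚ`). -/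
def DualSet {V : Type} [AddCommGroup V] [Module ℚ V]
    (B : V →ₗ[ℚ] V →ₗ[ℚ] ℚ) (L : Submodule ℤ V) : Set V :=
  {y : V | ∀ l ∈ L, ∃ a : ℤ, B y l = (a : ℚ)}

/-- `L` is a (full, integral, nondegenerate, symmetric) lattice in the rational vector
space `V` with respect to the bilinear form `B`:  it is finitely generated, spans `V`
over `ℚ`, the form is symmetric, nondegenerate, and `ℤ`-valued on `L`. -/
def IsIntLattice {V : Type} [AddCommGroup V] [Module ℚ V]
    (B : V →ₗ[ℚ] V →ₗ[ℚ] ℚ) (L : Submodule ℤ V) : Prop :=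
  L.FG ∧ Submodule.span ℚ (L : Set V) = ⊤ ∧
    (∀ x y : V, B x y = B y x) ∧
    (∀ x : V, (∀ y : V, B x y = 0) → x = 0) ∧
    (∀ x ∈ L, ∀ y ∈ L, ∃ a : ℤ, B x y = (a : ℚ))

/-- The lattice is even: `(x,x) ∈ 2ℤ` for all `x ∈ L`. -/
def IsEvenLat {V : Type} [AddCommGroup V] [Module ℚ V]
    (B : V →ₗ[ℚ] V →ₗ[ℚ] ℚ) (L : Submodule ℤ V) : Prop :=
  ∀ x ∈ L, ∃ a : ℤ, B x x = 2 * (a : ℚ)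

/-- Let `L` be an even lattice, `M ⊆ L` a sublattice on which the
restricted form is nondegenerate, and `M⊥ = {x ∈ L : (x,m) = 0 for all m ∈ M}`.
If `g : V → V` is the (unique) `ℚ`-linear extension of an element of `Õ(M)` which is the
identity on `M⊥ ⊗ ℚ`, then `g` maps `L` bijectively onto `L` and `g ∈ Õ(L)`; in
particular `Õ(M)` embeds as a subgroup of `Õ(L)`. -/
theorem aux_fd {V : Type} [AddCommGroup V] [Module ℚ V]
    (L : Submodule ℤ V) (hfg : L.FG)
    (hsp : Submodule.span ℚ (L : Set V) = ⊤) : FiniteDimensional ℚ V := by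
  obtain ⟨s, hs⟩ := hfg
  have h : Submodule.span ℚ (s : Set V) = ⊤ := by
    rw [eq_top_iff, ← hsp, Submodule.span_le]
    intro x hx
    rw [← hs] at hx
    exact Submodule.span_subset_span ℤ ℚ _ hx
  exact ⟨⟨s, h⟩⟩

theorem aux_den {V : Type} [AddCommGroup V] [Module ℚ V]
    (L : Submodule ℤ V) (x : V) (hx : x ∈ Submodule.span ℚ (L : Set V)) :
    ∃ n : ℤ, 0 < n ∧ (n : ℚ) • x ∈ L := by
  induction hx using Submodule.span_induction with
  | mem x hx => exact ⟨1, one_pos, by simpa using hx⟩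
  | zero => exact ⟨1, one_pos, by simp⟩
  | add x y _ _ hx hy =>
    obtain ⟨n, hn, hnx⟩ := hx
    obtain ⟨m, hm, hmy⟩ := hy
    refine ⟨n * m, mul_pos hn hm, ?_⟩
    rw [smul_add]
    apply Submodule.add_mem
    · have : ((n * m : ℤ) : ℚ) • x = (m : ℤ) • ((n : ℚ) • x) := by
        rw [← Int.cast_smul_eq_zsmul ℚ, smul_smul]
        push_cast; ring_nf
      rw [this]; exact Submodule.smul_mem _ _ hnx
    · have : ((n * m : ℤ) : ℚ) • y = (n : ℤ) • ((m : ℚ) • y) := by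
        rw [← Int.cast_smul_eq_zsmul ℚ, smul_smul]
        push_cast; ring_nf
      rw [this]; exact Submodule.smul_mem _ _ hmy
  | smul q x _ hx =>
    obtain ⟨n, hn, hnx⟩ := hx
    refine ⟨n * q.den, mul_pos hn (by exact_mod_cast q.pos), ?_⟩
    have : ((n * (q.den : ℤ) : ℤ) : ℚ) • (q • x) = (q.num : ℤ) • ((n : ℚ) • x) := by
      rw [← Int.cast_smul_eq_zsmul ℚ, smul_smul, smul_smul]
      congr 1
      push_cast
      rw [mul_assoc, mul_comm (q.den : ℚ) q, Rat.mul_den_eq_num]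
      ring
    rw [this]
    exact Submodule.smul_mem _ _ hnx

theorem stable_orthogonal_group_of_sublattice_embeds
    {V : Type} [AddCommGroup V] [Module ℚ V]
    (B : V →ₗ[ℚ] V →ₗ[ℚ] ℚ) (L M : Submodule ℤ V)
    (hlat : IsIntLattice B L) (heven : IsEvenLat B L) (hML : M ≤ L)
    -- the restricted form on `M` is nondegenerate:
    (hMnd : ∀ x ∈ Submodule.span ℚ (M : Set V),
      (∀ y ∈ Submodule.span ℚ (M : Set V), B x y = 0) → x = 0)
    (g : V →ₗ[ℚ] V)
    -- `g` is the identity on `M⊥ ⊗ ℚ`: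
    (hfix : ∀ x ∈ Submodule.span ℚ {x : V | x ∈ L ∧ ∀ m' ∈ M, B x m' = 0}, g x = x)
    -- `g` restricts to an isometry of `M` onto itself:
    (hbij : Set.BijOn g (M : Set V) (M : Set V))
    (hiso : ∀ x ∈ M, ∀ y ∈ M, B (g x) (g y) = B x y)
    -- which acts trivially on the discriminant group of `M`, i.e. `g ∈ Õ(M)`:
    (hstab : ∀ y ∈ Submodule.span ℚ (M : Set V),
      (∀ m' ∈ M, ∃ a : ℤ, B y m' = (a : ℚ)) → g y - y ∈ M) :
    Set.BijOn g (L : Set V) (L : Set V) ∧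
      (∀ x ∈ L, ∀ y ∈ L, B (g x) (g y) = B x y) ∧
      (∀ y ∈ DualSet B L, g y - y ∈ L) := by
  obtain ⟨hfg, hsp, hsymm, hnd, hint⟩ := hlat
  haveI : FiniteDimensional ℚ V := aux_fd L hfg hsp
  set Mq : Submodule ℚ V := Submodule.span ℚ (M : Set V) with hMqdef
  have hrefl : LinearMap.BilinForm.IsRefl B := fun x y h => by rw [hsymm]; exact h
  have hres : (LinearMap.BilinForm.restrict B Mq).Nondegenerate := by
    refine ⟨fun x hx => ?_, fun x hx => ?_⟩
    · exact Subtype.ext (hMnd x x.2 (fun y hy => hx ⟨y, hy⟩))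
    · exact Subtype.ext (hMnd x x.2 (fun y hy => by rw [hsymm]; exact hx ⟨y, hy⟩))
  have hcompl : IsCompl Mq (LinearMap.BilinForm.orthogonal B Mq) :=
    LinearMap.BilinForm.isCompl_orthogonal_of_restrict_nondegenerate hrefl hres
  set Nq := LinearMap.BilinForm.orthogonal B Mq with hNqdef
  have hNmem : ∀ n ∈ Nq, ∀ m ∈ Mq, B m n = 0 := by
    intro n hn m hm
    exact (LinearMap.BilinForm.mem_orthogonal_iff.mp hn) m hm
  have hdec : ∀ x : V, ∃ m ∈ Mq, ∃ n ∈ Nq, x = m + n := by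
    intro x
    have hx : x ∈ Mq ⊔ Nq := by rw [hcompl.sup_eq_top]; trivial
    obtain ⟨m, hm, n, hn, h⟩ := Submodule.mem_sup.mp hx
    exact ⟨m, hm, n, hn, h.symm⟩
  have hgMq : ∀ m ∈ Mq, g m ∈ Mq := by
    intro m hm
    induction hm using Submodule.span_induction with
    | mem x hx => exact Submodule.subset_span (hbij.mapsTo hx)
    | zero => simp
    | add x y _ _ hx hy => rw [map_add]; exact Submodule.add_mem _ hx hy
    | smul q x _ hx => rw [map_smul]; exact Submodule.smul_mem _ _ hx
  have hisoQ : ∀ x ∈ Mq, ∀ y ∈ Mq, B (g x) (g y) = B x y := by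
    intro x hx
    induction hx using Submodule.span_induction with
    | mem a ha =>
      intro y hy
      induction hy using Submodule.span_induction with
      | mem b hb => exact hiso a ha b hb
      | zero => simp
      | add u v _ _ hu hv => simp only [map_add, hu, hv]
      | smul q u _ hu => simp only [map_smul, hu]
    | zero => intro y hy; simp
    | add u v _ _ hu hv =>
      intro y hy
      simp only [map_add, LinearMap.add_apply, hu y hy, hv y hy]
    | smul q u _ hu =>
      intro y hy
      simp only [map_smul, LinearMap.smul_apply, hu y hy]
  have hNfix : ∀ n ∈ Nq, g n = n := by
    intro n hn
    apply hfix
    have hnT : n ∈ Submodule.span ℚ (L : Set V) := by rw [hsp]; trivial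
    obtain ⟨k, hk, hkL⟩ := aux_den L n hnT
    have hset : (k : ℚ) • n ∈ {x : V | x ∈ L ∧ ∀ m' ∈ M, B x m' = 0} := by
      refine ⟨hkL, fun m' hm' => ?_⟩
      have h0 : B m' n = 0 := hNmem n hn m' (Submodule.subset_span hm')
      have h1 : B n m' = 0 := by rw [hsymm]; exact h0
      simp only [map_smul, LinearMap.smul_apply, h1, smul_eq_mul, mul_zero]
    have hne : (k : ℚ) ≠ 0 := by exact_mod_cast hk.ne'
    have : n = (k : ℚ)⁻¹ • ((k : ℚ) • n) := by
      rw [smul_smul, inv_mul_cancel₀ hne, one_smul]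
    rw [this]
    exact Submodule.smul_mem _ _ (Submodule.subset_span hset)
  have hmain : ∀ x : V, (∀ m' ∈ M, ∃ a : ℤ, B x m' = (a : ℚ)) → g x - x ∈ M := by
    intro x hx
    obtain ⟨m, hm, n, hn, rfl⟩ := hdec x
    have h1 : g (m + n) - (m + n) = g m - m := by
      rw [map_add, hNfix n hn]; abel
    rw [h1]
    apply hstab m hm
    intro m' hm'
    obtain ⟨a, ha⟩ := hx m' hm'
    refine ⟨a, ?_⟩
    have hnm' : B n m' = 0 := by
      rw [hsymm]; exact hNmem n hn m' (Submodule.subset_span hm')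
    have : B (m + n) m' = B m m' + B n m' := by
      simp [map_add, LinearMap.add_apply]
    rw [this, hnm', add_zero] at ha
    exact ha
  -- maps to
  have hmaps : ∀ l ∈ L, g l ∈ L := by
    intro l hl
    have hM : g l - l ∈ M := hmain l (fun m' hm' => hint l hl m' (hML hm'))
    have : g l = (g l - l) + l := by abel
    rw [this]
    exact Submodule.add_mem _ (hML hM) hl
  -- injectivity
  have hinj : ∀ x : V, g x = 0 → x = 0 := by
    intro x hx
    obtain ⟨m, hm, n, hn, rfl⟩ := hdec x
    rw [map_add, hNfix n hn] at hx
    have h1 : g m = -n := eq_neg_of_add_eq_zero_left hx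
    have hmem : g m ∈ Mq ⊓ Nq := ⟨hgMq m hm, h1 ▸ Submodule.neg_mem _ hn⟩
    rw [hcompl.inf_eq_bot] at hmem
    have hgm0 : g m = 0 := hmem
    have hm0 : m = 0 := by
      apply hMnd m hm
      intro y hy
      rw [← hisoQ m hm y hy, hgm0]
      simp
    have hn0 : n = 0 := by
      have := h1 ▸ hgm0
      simpa using this.symm
    rw [hm0, hn0, add_zero]
  have hinjOn : Set.InjOn g (L : Set V) := by
    intro x _ y _ h
    have : g (x - y) = 0 := by rw [map_sub, h, sub_self]
    have := hinj _ this
    exact sub_eq_zero.mp this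
  -- surjectivity on Mq
  have hsurjMq : ∀ m ∈ Mq, ∃ m' ∈ Mq, g m' = m := by
    intro m hm
    have hle : Mq ≤ Submodule.map g Mq := by
      rw [hMqdef]
      apply Submodule.span_le.mpr
      intro x hx
      obtain ⟨y, hy, hgy⟩ := hbij.surjOn hx
      exact ⟨y, Submodule.subset_span hy, hgy⟩
    obtain ⟨m', hm', hgm'⟩ := hle hm
    exact ⟨m', hm', hgm'⟩
  have hsurjOn : Set.SurjOn g (L : Set V) (L : Set V) := by
    intro l hl
    obtain ⟨m, hm, n, hn, hlmn⟩ := hdec l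
    obtain ⟨m'', hm'', hgm''⟩ := hsurjMq m hm
    have hdualm'' : ∀ m' ∈ M, ∃ a : ℤ, B m'' m' = (a : ℚ) := by
      intro m' hm'
      have he : B m'' m' = B m (g m') := by
        rw [← hgm'']
        exact (hisoQ m'' hm'' m' (Submodule.subset_span hm')).symm
      have hgm'M : g m' ∈ M := hbij.mapsTo hm'
      obtain ⟨a, ha⟩ := hint l hl (g m') (hML hgm'M)
      refine ⟨a, ?_⟩
      have hngm' : B n (g m') = 0 := by
        rw [hsymm]; exact hNmem n hn (g m') (Submodule.subset_span hgm'M)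
      have : B l (g m') = B m (g m') + B n (g m') := by
        rw [hlmn]; simp [map_add, LinearMap.add_apply]
      rw [this, hngm', add_zero] at ha
      rw [he, ha]
    have hMdiff : g m'' - m'' ∈ M := hstab m'' hm'' hdualm''
    rw [hgm''] at hMdiff
    refine ⟨l - (m - m''), ?_, ?_⟩
    · exact Submodule.sub_mem _ hl (hML hMdiff)
    · have he : l - (m - m'') = m'' + n := by rw [hlmn]; abel
      rw [he, map_add, hgm'', hNfix n hn, hlmn]
  -- isometry
  have hisoV : ∀ x y : V, B (g x) (g y) = B x y := by
    intro x y
    obtain ⟨m1, hm1, n1, hn1, rfl⟩ := hdec x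
    obtain ⟨m2, hm2, n2, hn2, rfl⟩ := hdec y
    have c1 : B (g m1) n2 = 0 := hNmem n2 hn2 (g m1) (hgMq m1 hm1)
    have c2 : B n1 (g m2) = 0 := by
      rw [hsymm]; exact hNmem n1 hn1 (g m2) (hgMq m2 hm2)
    have c1' : B m1 n2 = 0 := hNmem n2 hn2 m1 hm1
    have c2' : B n1 m2 = 0 := by
      rw [hsymm]; exact hNmem n1 hn1 m2 hm2
    have e1 : g (m1 + n1) = g m1 + n1 := by rw [map_add, hNfix n1 hn1]
    have e2 : g (m2 + n2) = g m2 + n2 := by rw [map_add, hNfix n2 hn2]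
    rw [e1, e2]
    simp only [map_add, LinearMap.add_apply, hisoQ m1 hm1 m2 hm2, c1, c2, c1', c2']
  exact ⟨⟨hmaps, hinjOn, hsurjOn⟩, fun x _ y _ => hisoV x y,
    fun y hy => hML (hmain y (fun m' hm' => hy m' (hML hm')))⟩
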